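/- (Symmetric sum formula; Hoffman, Murahara) For any positive integers k1,…,kr, for all but finitely many primes p one has Σ_{σ ∈ 𝔖_r} Z_p(k_{σ(1)},…,k_{σ(r)}) = 0 in ℤ/pℤ, where 𝔖_r is the symmetric group on r letters. Equivalently, Σ_{σ ∈ 𝔖_r} ζ_𝒜(k_{σ(1)},…,k_{σ(r)}) = 0. -/

import Mathlib

/-- Truncated multiple harmonic sum
`Z_p(k₁,…,k_r) = ∑_{0 < n₁ < ⋯ < n_r < p} 1/(n₁^{k₁} ⋯ n_r^{k_r})` in `ZMod p`,
with the index given as a tuple `k : Fin r → ℕ`.  (For `r = 0` the value is `1`.) -/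
def Zfin (p : ℕ) {r : ℕ} (k : Fin r → ℕ) : ZMod p :=
  ∑ n ∈ Finset.univ.filter
      (fun n : Fin r → Fin p =>
        (∀ j1 j2 : Fin r, j1 < j2 → n j1 < n j2) ∧ ∀ j : Fin r, 0 < (n j : ℕ)),
    ∏ j : Fin r, (((n j : ℕ) : ZMod p))⁻¹ ^ k j

/-- Truncated multiple harmonic star sum
`Z*_p(k₁,…,k_r) = ∑_{0 < n₁ ≤ ⋯ ≤ n_r < p} 1/(n₁^{k₁} ⋯ n_r^{k_r})` in `ZMod p`. -/
def ZSfin (p : ℕ) {r : ℕ} (k : Fin r → ℕ) : ZMod p :=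
  ∑ n ∈ Finset.univ.filter
      (fun n : Fin r → Fin p =>
        (∀ j1 j2 : Fin r, j1 < j2 → n j1 ≤ n j2) ∧ ∀ j : Fin r, 0 < (n j : ℕ)),
    ∏ j : Fin r, (((n j : ℕ) : ZMod p))⁻¹ ^ k j

/-- `Z_p` on an index given as a list. -/
def ZL (p : ℕ) (k : List ℕ) : ZMod p := Zfin p k.get

/-- `Z*_p` on an index given as a list. -/
def ZSL (p : ℕ) (k : List ℕ) : ZMod p := ZSfin p k.get

open Finset

/-! ### Auxiliary definitions and lemmas -/

/-- The summand of the multiple harmonic sums. -/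
def TermP (p : ℕ) {r : ℕ} (k : Fin r → ℕ) (n : Fin r → Fin p) : ZMod p :=
  ∏ j : Fin r, (((n j : ℕ) : ZMod p))⁻¹ ^ k j

/-- Tuples with pairwise distinct, nonzero entries. -/
def InjS (p r : ℕ) : Finset (Fin r → Fin p) :=
  univ.filter (fun n => Function.Injective n ∧ ∀ j, 0 < (n j : ℕ))

/-- Tuples whose first `r` entries are pairwise distinct and all of whose entries
are nonzero. -/
def BS (p r : ℕ) : Finset (Fin (r + 1) → Fin p) :=
  univ.filter (fun n => Function.Injective (fun i : Fin r => n i.castSucc)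
    ∧ ∀ j, 0 < (n j : ℕ))

lemma Spow (p : ℕ) (hp : p.Prime) (k : ℕ) (hk : 0 < k) (hk2 : k < p - 1) :
    ∑ x ∈ univ.filter (fun x : Fin p => 0 < (x : ℕ)), (((x : ℕ) : ZMod p))⁻¹ ^ k = 0 := by
  haveI : Fact p.Prime := ⟨hp⟩
  haveI : NeZero p := ⟨hp.pos.ne'⟩
  have h1 : ∑ x ∈ univ.filter (fun x : Fin p => 0 < (x : ℕ)), (((x : ℕ) : ZMod p))⁻¹ ^ k
      = ∑ u : (ZMod p)ˣ, ((u : ZMod p))⁻¹ ^ k := by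
    apply Finset.sum_bij'
      (i := fun (x : Fin p) (hx : x ∈ univ.filter (fun x : Fin p => 0 < (x : ℕ))) =>
        ZMod.unitOfCoprime (x : ℕ) (by
          have hx' : 0 < (x : ℕ) := (Finset.mem_filter.1 hx).2
          exact Nat.Coprime.symm ((hp.coprime_iff_not_dvd).2
            (fun hdvd => absurd (Nat.le_of_dvd hx' hdvd) (not_le.2 x.isLt)))))
      (j := fun (u : (ZMod p)ˣ) _ => ⟨(u : ZMod p).val, ZMod.val_lt _⟩)
    case hi => intro x hx; exact Finset.mem_univ _
    case hj =>
      intro u hu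
      simp only [Finset.mem_filter, Finset.mem_univ, true_and]
      exact Nat.pos_of_ne_zero (fun h => Units.ne_zero u ((ZMod.val_eq_zero _).1 h))
    case left_neg =>
      intro x hx
      apply Fin.ext
      simp [ZMod.coe_unitOfCoprime, ZMod.val_natCast_of_lt x.isLt]
    case right_neg =>
      intro u hu
      apply Units.ext
      simp only [ZMod.coe_unitOfCoprime]
      exact ZMod.natCast_rightInverse _
    case h =>
      intro x hx
      rw [ZMod.coe_unitOfCoprime]
  rw [h1]
  have h2 : ∑ u : (ZMod p)ˣ, ((u : ZMod p))⁻¹ ^ k = ∑ u : (ZMod p)ˣ, ((u : ZMod p)) ^ k := by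
    apply Fintype.sum_equiv (Equiv.inv (ZMod p)ˣ)
    intro u
    rw [Equiv.inv_apply, Units.val_inv_eq_inv_val]
  rw [h2, FiniteField.sum_pow_units, if_neg]
  rw [ZMod.card]
  intro hdvd
  exact absurd (Nat.le_of_dvd hk hdvd) (not_le.2 hk2)

lemma inj_succ_iff {p r : ℕ} (n : Fin (r + 1) → Fin p) :
    Function.Injective n ↔
      Function.Injective (fun i : Fin r => n i.castSucc) ∧
      ∀ i : Fin r, n (Fin.last r) ≠ n i.castSucc := by
  constructor
  · intro h
    refine ⟨fun a b hab => Fin.castSucc_injective r (h hab), fun i hi => ?_⟩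
    exact absurd (h hi) (Fin.castSucc_lt_last i).ne'
  · rintro ⟨h1, h2⟩ a b hab
    rcases Fin.eq_castSucc_or_eq_last a with ⟨a', rfl⟩ | rfl <;>
      rcases Fin.eq_castSucc_or_eq_last b with ⟨b', rfl⟩ | rfl
    · exact congrArg Fin.castSucc (h1 hab)
    · exact absurd hab.symm (h2 a')
    · exact absurd hab (h2 b')
    · rfl

lemma TermP_succ {p r : ℕ} (k : Fin (r + 1) → ℕ) (n : Fin (r + 1) → Fin p) :
    TermP p k n = TermP p (fun j : Fin r => k j.castSucc) (Fin.init n)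
      * (((n (Fin.last r) : ℕ) : ZMod p))⁻¹ ^ k (Fin.last r) := by
  unfold TermP
  rw [Fin.prod_univ_castSucc]
  rfl

lemma TermP_update {p r : ℕ} (m : Fin r → Fin p) (kk : Fin r → ℕ) (i : Fin r) (c : ℕ) :
    TermP p (Function.update kk i (kk i + c)) m
      = TermP p kk m * (((m i : ℕ) : ZMod p))⁻¹ ^ c := by
  classical
  unfold TermP
  calc ∏ j : Fin r, (((m j : ℕ) : ZMod p))⁻¹ ^ Function.update kk i (kk i + c) j
      = ∏ j : Fin r, ((((m j : ℕ) : ZMod p))⁻¹ ^ kk j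
          * (if j = i then (((m j : ℕ) : ZMod p))⁻¹ ^ c else 1)) := by
        refine Finset.prod_congr rfl (fun j _ => ?_)
        by_cases hj : j = i
        · subst hj
          rw [Function.update_self, pow_add, if_pos rfl]
        · rw [Function.update_of_ne hj, if_neg hj, mul_one]
    _ = (∏ j : Fin r, (((m j : ℕ) : ZMod p))⁻¹ ^ kk j)
          * ∏ j : Fin r, (if j = i then (((m j : ℕ) : ZMod p))⁻¹ ^ c else 1) :=
        Finset.prod_mul_distrib
    _ = (∏ j : Fin r, (((m j : ℕ) : ZMod p))⁻¹ ^ kk j) * (((m i : ℕ) : ZMod p))⁻¹ ^ c := by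
        rw [Finset.prod_ite_eq' univ i (fun j => (((m j : ℕ) : ZMod p))⁻¹ ^ c),
          if_pos (Finset.mem_univ i)]

lemma key (p : ℕ) (hp : p.Prime) :
    ∀ r : ℕ, 0 < r → ∀ k : Fin r → ℕ, (∀ j, 0 < k j) → (∑ j, k j) + 1 < p →
    ∑ n ∈ InjS p r, TermP p k n = 0 := by
  intro r
  induction r with
  | zero => intro h; exact absurd h (lt_irrefl 0)
  | succ r IH =>
    intro _ k hkpos hksum
    classical
    have hsum_le : ∀ j : Fin (r + 1), k j ≤ ∑ j, k j :=
      fun j => Finset.single_le_sum (fun j _ => Nat.zero_le _) (Finset.mem_univ j)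
    have hklast_lt : k (Fin.last r) < p - 1 := by
      have := hsum_le (Fin.last r); omega
    -- Factorized sum over BS is zero
    have factA : ∑ n ∈ BS p r, TermP p k n = 0 := by
      have hprod : ∑ n ∈ BS p r, TermP p k n
          = ∑ q ∈ (InjS p r) ×ˢ (univ.filter (fun x : Fin p => 0 < (x : ℕ))),
              TermP p k (Fin.snoc q.1 q.2) := by
        apply Finset.sum_bij'
          (i := fun n _ => (Fin.init n, n (Fin.last r)))
          (j := fun q _ => Fin.snoc q.1 q.2)
        case hi =>
          intro n hn
          obtain ⟨hn1, hn2⟩ := (Finset.mem_filter.1 hn).2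
          refine Finset.mem_product.2 ⟨?_, ?_⟩
          · exact Finset.mem_filter.2 ⟨Finset.mem_univ _, hn1, fun j => hn2 j.castSucc⟩
          · exact Finset.mem_filter.2 ⟨Finset.mem_univ _, hn2 (Fin.last r)⟩
        case hj =>
          intro q hq
          obtain ⟨hq1, hq2⟩ := Finset.mem_product.1 hq
          obtain ⟨hq11, hq12⟩ := (Finset.mem_filter.1 hq1).2
          refine Finset.mem_filter.2 ⟨Finset.mem_univ _, ?_, ?_⟩
          · have : (fun i : Fin r => (Fin.snoc q.1 q.2 : Fin (r+1) → Fin p) i.castSucc) = q.1 := by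
              funext i; exact Fin.snoc_castSucc ..
            rw [this]; exact hq11
          · intro j
            rcases Fin.eq_castSucc_or_eq_last j with ⟨j', rfl⟩ | rfl
            · rw [Fin.snoc_castSucc]; exact hq12 j'
            · rw [Fin.snoc_last]; exact (Finset.mem_filter.1 hq2).2
        case left_neg =>
          intro n hn; exact Fin.snoc_init_self n
        case right_neg =>
          intro q hq
          apply Prod.ext <;> simp
        case h =>
          intro n hn; rw [Fin.snoc_init_self]
      rw [hprod, Finset.sum_product]
      have hterm : ∀ (m : Fin r → Fin p) (x : Fin p),
          TermP p k (Fin.snoc m x)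
            = TermP p (fun j : Fin r => k j.castSucc) m * (((x : ℕ) : ZMod p))⁻¹ ^ k (Fin.last r) := by
        intro m x
        rw [TermP_succ, Fin.init_snoc, Fin.snoc_last]
      calc ∑ m ∈ InjS p r, ∑ x ∈ univ.filter (fun x : Fin p => 0 < (x : ℕ)),
              TermP p k (Fin.snoc m x)
          = ∑ m ∈ InjS p r, TermP p (fun j : Fin r => k j.castSucc) m *
              ∑ x ∈ univ.filter (fun x : Fin p => 0 < (x : ℕ)),
                (((x : ℕ) : ZMod p))⁻¹ ^ k (Fin.last r) := by
            refine Finset.sum_congr rfl (fun m _ => ?_)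
            rw [Finset.mul_sum]
            exact Finset.sum_congr rfl (fun x _ => hterm m x)
        _ = 0 := by
            rw [Spow p hp _ (hkpos (Fin.last r)) hklast_lt]
            simp
    -- Split the sum over BS according to collision of the last entry
    have split : ∑ n ∈ BS p r, TermP p k n
        = (∑ n ∈ InjS p (r + 1), TermP p k n)
          + ∑ i : Fin r, ∑ n ∈ (BS p r).filter
              (fun n => n (Fin.last r) = n i.castSucc), TermP p k n := by
      have hfib := Finset.sum_fiberwise_of_maps_to
        (g := fun n : Fin (r + 1) → Fin p =>
          Fin.find? (fun i : Fin r => decide (n (Fin.last r) = n i.castSucc)))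
        (fun n _ => Finset.mem_univ _) (TermP p k) (s := BS p r)
      rw [← hfib, Fintype.sum_option]
      congr 1
      · congr 1
        ext n
        simp only [Finset.mem_filter, Finset.mem_univ, true_and, Fin.find?_eq_none_iff, decide_eq_false_iff_not,
          BS, InjS]
        constructor
        · rintro ⟨⟨h1, h2⟩, h3⟩
          exact ⟨(inj_succ_iff n).2 ⟨h1, h3⟩, h2⟩
        · rintro ⟨h1, h2⟩
          obtain ⟨h1a, h1b⟩ := (inj_succ_iff n).1 h1
          exact ⟨⟨h1a, h2⟩, h1b⟩
      · refine Finset.sum_congr rfl (fun i _ => ?_)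
        congr 1
        ext n
        simp only [Finset.mem_filter, Finset.mem_univ, true_and, Fin.find?_eq_some_iff, decide_eq_true_eq,
            decide_eq_false_iff_not, BS]
        constructor
        · rintro ⟨hn, hcol, _⟩; exact ⟨hn, hcol⟩
        · rintro ⟨hn, hcol⟩
          refine ⟨hn, hcol, fun j hj => ?_⟩
          intro heq
          have : i = j := hn.1 (hcol.symm.trans heq)
          exact absurd this hj.ne'
    -- Each collision sum vanishes by induction
    have coll : ∀ i : Fin r,
        ∑ n ∈ (BS p r).filter (fun n => n (Fin.last r) = n i.castSucc), TermP p k n = 0 := by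
      intro i
      have rpos : 0 < r := i.pos
      set kin : Fin r → ℕ := fun j => k j.castSucc with hkin
      set k' : Fin r → ℕ := Function.update kin i (kin i + k (Fin.last r)) with hk'
      have hk'pos : ∀ j, 0 < k' j := by
        intro j
        by_cases h : j = i
        · subst h; rw [hk', Function.update_self]; exact Nat.lt_of_lt_of_le (hkpos _) (Nat.le_add_right _ _)
        · rw [hk', Function.update_of_ne h]; exact hkpos _
      have hk'sum : (∑ j, k' j) + 1 < p := by
        have hsum' : ∑ j, k' j = ∑ j : Fin (r + 1), k j := by
          have hval : ∀ j : Fin r, k' j = kin j + (if j = i then k (Fin.last r) else 0) := by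
            intro j
            by_cases h : j = i
            · subst h; rw [hk', Function.update_self, if_pos rfl]
            · rw [hk', Function.update_of_ne h, if_neg h, Nat.add_zero]
          rw [Fin.sum_univ_castSucc (f := k)]
          calc ∑ j, k' j = ∑ j, (kin j + (if j = i then k (Fin.last r) else 0)) :=
                Finset.sum_congr rfl (fun j _ => hval j)
            _ = (∑ j, kin j) + ∑ j, (if j = i then k (Fin.last r) else 0) :=
                Finset.sum_add_distrib
            _ = (∑ j, kin j) + k (Fin.last r) := by
                rw [Finset.sum_ite_eq' univ i (fun _ => k (Fin.last r)),
                  if_pos (Finset.mem_univ i)]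
        omega
      have hbij : ∑ n ∈ (BS p r).filter (fun n => n (Fin.last r) = n i.castSucc), TermP p k n
          = ∑ m ∈ InjS p r, TermP p k' m := by
        apply Finset.sum_bij'
          (i := fun n _ => Fin.init n)
          (j := fun m _ => Fin.snoc m (m i))
        case hi =>
          intro n hn
          obtain ⟨hnB, _⟩ := Finset.mem_filter.1 hn
          obtain ⟨hn1, hn2⟩ := (Finset.mem_filter.1 hnB).2
          exact Finset.mem_filter.2 ⟨Finset.mem_univ _, hn1, fun j => hn2 j.castSucc⟩
        case hj =>
          intro m hm
          obtain ⟨hm1, hm2⟩ := (Finset.mem_filter.1 hm).2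
          refine Finset.mem_filter.2 ⟨Finset.mem_filter.2 ⟨Finset.mem_univ _, ?_, ?_⟩, ?_⟩
          · have : (fun j : Fin r => (Fin.snoc m (m i) : Fin (r+1) → Fin p) j.castSucc) = m := by
              funext j; exact Fin.snoc_castSucc ..
            rw [this]; exact hm1
          · intro j
            rcases Fin.eq_castSucc_or_eq_last j with ⟨j', rfl⟩ | rfl
            · rw [Fin.snoc_castSucc]; exact hm2 j'
            · rw [Fin.snoc_last]; exact hm2 i
          · rw [Fin.snoc_last, Fin.snoc_castSucc]
        case left_neg =>
          intro n hn
          have hcol : n (Fin.last r) = n i.castSucc := (Finset.mem_filter.1 hn).2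
          have h' : Fin.init n i = n (Fin.last r) := hcol.symm
          rw [h', Fin.snoc_init_self]
        case right_neg =>
          intro m hm
          exact Fin.init_snoc ..
        case h =>
          intro n hn
          have hcol : n (Fin.last r) = n i.castSucc := (Finset.mem_filter.1 hn).2
          rw [TermP_succ, hk', TermP_update, hcol]
          rfl
      rw [hbij]
      exact IH rpos k' hk'pos hk'sum
    rw [split] at factA
    rw [Finset.sum_congr rfl (fun i _ => coll i), Finset.sum_const_zero, add_zero] at factA
    exact factA

/-- **Symmetric sum formula** (Hoffman, Murahara): for positive integers `k₁,…,k_r`, for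
all but finitely many primes `p`, `∑_{σ ∈ 𝔖_r} Z_p(k_{σ(1)},…,k_{σ(r)}) = 0` in `ℤ/pℤ`;
equivalently `∑_{σ ∈ 𝔖_r} ζ_𝒜(k_{σ(1)},…,k_{σ(r)}) = 0`. -/
theorem symmetric_sum_fmzv (r : ℕ) (hr : 0 < r) (ks : Fin r → ℕ) (hpos : ∀ j, 0 < ks j) :
    ∃ N : ℕ, ∀ p : ℕ, p.Prime → N < p →
      ∑ σ : Equiv.Perm (Fin r), Zfin p (fun j => ks (σ j)) = 0 := by
  classical
  refine ⟨(∑ j, ks j) + 1, fun p hp hNp => ?_⟩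
  have hmain : ∑ σ : Equiv.Perm (Fin r), Zfin p (fun j => ks (σ j))
      = ∑ m ∈ InjS p r, TermP p ks m := by
    have hZ : ∀ σ : Equiv.Perm (Fin r), Zfin p (fun j => ks (σ j))
        = ∑ n ∈ Finset.univ.filter
            (fun n : Fin r → Fin p =>
              (∀ j1 j2 : Fin r, j1 < j2 → n j1 < n j2) ∧ ∀ j : Fin r, 0 < (n j : ℕ)),
          TermP p ks (n ∘ σ.symm) := by
      intro σ
      unfold Zfin
      refine Finset.sum_congr rfl (fun n _ => ?_)
      unfold TermP
      rw [← Equiv.prod_comp σ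
        (fun j => (((n ∘ σ.symm) j : ℕ) : ZMod p)⁻¹ ^ ks j)]
      refine Finset.prod_congr rfl (fun j _ => ?_)
      simp
    simp_rw [hZ]
    rw [← Finset.sum_product']
    apply Finset.sum_bij'
      (i := fun q _ => q.2 ∘ q.1.symm)
      (j := fun m _ => (Tuple.sort m, m ∘ Tuple.sort m))
    case hi =>
      rintro ⟨σ, n⟩ hq
      obtain ⟨hn1, hn2⟩ := (Finset.mem_filter.1 (Finset.mem_product.1 hq).2).2
      have hmono : StrictMono n := fun a b hab => hn1 a b hab
      refine Finset.mem_filter.2 ⟨Finset.mem_univ _, ?_, fun j => hn2 _⟩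
      exact hmono.injective.comp σ.symm.injective
    case hj =>
      intro m hm
      obtain ⟨hm1, hm2⟩ := (Finset.mem_filter.1 hm).2
      refine Finset.mem_product.2 ⟨Finset.mem_univ _, Finset.mem_filter.2
        ⟨Finset.mem_univ _, ?_, fun j => hm2 _⟩⟩
      have hmono : Monotone (m ∘ Tuple.sort m) := Tuple.monotone_sort m
      have hinj : Function.Injective (m ∘ Tuple.sort m) :=
        hm1.comp (Tuple.sort m).injective
      exact fun j1 j2 h => hmono.strictMono_of_injective hinj h
    case left_neg =>
      rintro ⟨σ, n⟩ hq
      obtain ⟨hn1, _⟩ := (Finset.mem_filter.1 (Finset.mem_product.1 hq).2).2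
      have hmono : StrictMono n := fun a b hab => hn1 a b hab
      have hsort : σ = Tuple.sort (n ∘ σ.symm) := by
        rw [Tuple.eq_sort_iff]
        constructor
        · intro a b hab
          have : (n ∘ σ.symm) (σ a) = n a := by simp
          have h2 : (n ∘ σ.symm) (σ b) = n b := by simp
          simp only [Function.comp_apply, Equiv.symm_apply_apply]
          exact hmono.monotone hab
        · intro a b hab heq
          simp only [Function.comp_apply, Equiv.symm_apply_apply] at heq
          exact absurd heq (hmono hab).ne
      refine Prod.ext hsort.symm ?_
      funext x
      simp only [Function.comp_apply]
      rw [← hsort]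
      simp
    case right_neg =>
      intro m hm
      funext x
      simp
    case h =>
      rintro ⟨σ, n⟩ hq
      rfl
  rw [hmain]
  exact key p hp r hr ks hpos hNp
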